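/- Every strongly connected synchronizing n-state automaton is strongly transitive; moreover, if u is a synchronizing word, then the automaton admits an independent collection of n words each of length at most |u| + n - 1. -/

import Mathlib

/-- Action of a word on a state of a DFA. -/
def act {Q A : Type*} (δ : Q → A → Q) (q : Q) (w : List A) : Q := w.foldl δ q

/-- Preimage `S·w⁻¹ = {q : q·w ∈ S}` of a subset under a word. -/
def preim {Q A : Type*} [Fintype Q] [DecidableEq Q] (δ : Q → A → Q)
    (S : Finset Q) (w : List A) : Finset Q :=
  Finset.univ.filter fun q => act δ q w ∈ S

lemma act_append {Q A : Type*} (δ : Q → A → Q) (q : Q) (a b : List A) :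
    act δ q (a ++ b) = act δ (act δ q a) b :=
  List.foldl_append

lemma shorten {Q A : Type*} [Fintype Q] (δ : Q → A → Q) (p t : Q) (v : List A)
    (hv : act δ p v = t) (i j : Fin (v.length + 1)) (hij : (i : ℕ) < j)
    (heq : act δ p (v.take i) = act δ p (v.take j)) :
    ∃ w : List A, act δ p w = t ∧ w.length < v.length := by
  refine ⟨v.take i ++ v.drop j, ?_, ?_⟩
  · rw [act_append, heq, ← act_append, List.take_append_drop, hv]
  · have hj : (j : ℕ) ≤ v.length := Nat.lt_succ_iff.mp j.isLt
    simp only [List.length_append, List.length_take, List.length_drop]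
    omega

lemma short_reach {Q A : Type*} [Fintype Q] (δ : Q → A → Q) (p t : Q)
    (h : ∃ v : List A, act δ p v = t) :
    ∃ v : List A, act δ p v = t ∧ v.length + 1 ≤ Fintype.card Q := by
  suffices H : ∀ m (v : List A), v.length = m → act δ p v = t →
      ∃ v : List A, act δ p v = t ∧ v.length + 1 ≤ Fintype.card Q by
    obtain ⟨v, hv⟩ := h
    exact H v.length v rfl hv
  intro m
  induction m using Nat.strong_induction_on with
  | _ m ih =>
    intro v hm hv
    subst hm
    by_cases hle : v.length + 1 ≤ Fintype.card Q
    · exact ⟨v, hv, hle⟩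
    · have hninj : ¬ Function.Injective
          (fun i : Fin (v.length + 1) => act δ p (v.take i)) := by
        intro hinj
        have hc := Fintype.card_le_of_injective _ hinj
        simp only [Fintype.card_fin] at hc
        omega
      rw [Function.not_injective_iff] at hninj
      obtain ⟨i, j, heq, hne⟩ := hninj
      rcases Ne.lt_or_gt hne with hij | hij
      · obtain ⟨w, hw, hlen⟩ := shorten δ p t v hv i j hij heq
        exact ih w.length hlen w rfl hw
      · obtain ⟨w, hw, hlen⟩ := shorten δ p t v hv j i hij heq.symm
        exact ih w.length hlen w rfl hw

theorem stmt2 {Q A : Type*} [Fintype Q] (δ : Q → A → Q) (n : ℕ)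
    (hn : Fintype.card Q = n)
    (hsc : ∀ p q : Q, ∃ u : List A, act δ p u = q)
    (u : List A) (hu : ∀ q q' : Q, act δ q u = act δ q' u) :
    ∃ W : Fin n → List A,
      (∀ s t : Q, ∃ i, act δ s (W i) = t) ∧
      (∀ i, (W i).length ≤ u.length + n - 1) := by
  rcases isEmpty_or_nonempty Q with hE | hNE
  · have hn0 : n = 0 := by rw [← hn]; simp
    subst hn0
    exact ⟨Fin.elim0, fun s t => (hE.false s).elim, fun i => i.elim0⟩
  · obtain ⟨q⟩ := hNE
    set q0 := act δ q u with hq0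
    -- for each target state pick a short word from q0
    have hv : ∀ t : Q, ∃ v : List A, act δ q0 v = t ∧ v.length + 1 ≤ Fintype.card Q :=
      fun t => short_reach δ q0 t (hsc q0 t)
    choose v hv1 hv2 using hv
    have e : Fin n ≃ Q := (Fintype.equivFinOfCardEq hn).symm
    refine ⟨fun i => u ++ v (e i), fun s t => ?_, fun i => ?_⟩
    · refine ⟨e.symm t, ?_⟩
      rw [act_append, e.apply_symm_apply]
      have : act δ s u = q0 := hu s q
      rw [this, hv1]
    · have := hv2 (e i)
      have hn1 : 1 ≤ n := hn ▸ Fintype.card_pos_iff.mpr ⟨q⟩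
      rw [hn] at this
      simp only [List.length_append]
      omega
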